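/- arXiv:2503.14158 — 4 statements merged into one kernel-verified Lean document; each statement's English description precedes it below -/
import Mathlib

section
/- Let λx, λy > 0, θ ∈ ℝ, and let φ : ℝ → ℝ be continuous. Define x(t) = ∫_0^t e^{-λx(t-s)} φ(s) ds, y(t) = ∫_0^t e^{-λy(t-s)} φ(s) ds, z(t) = θ x(t) + (1-θ) y(t), and the path-dependent functional ẑ(t) = ∫_0^t e^{-(λx(1-θ)+λy θ)(t-s)} z(s) ds. Then z is differentiable on [0,∞) and for every t ≥ 0, z'(t) = -(λx θ + λy (1-θ)) z(t) + θ(1-θ)(λy - λx)² ẑ(t) + φ(t). -/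
open MeasureTheory intervalIntegral

private lemma conv_deriv (b : ℝ) (ψ : ℝ → ℝ) (hψ : Continuous ψ) (t : ℝ) :
    HasDerivAt (fun u => ∫ s in (0:ℝ)..u, Real.exp (-b * (u - s)) * ψ s)
      (-b * (∫ s in (0:ℝ)..t, Real.exp (-b * (t - s)) * ψ s) + ψ t) t := by
  have hrep : ∀ u : ℝ, (∫ s in (0:ℝ)..u, Real.exp (-b * (u - s)) * ψ s)
      = Real.exp (-b * u) * ∫ s in (0:ℝ)..u, Real.exp (b * s) * ψ s := by
    intro u
    rw [← intervalIntegral.integral_const_mul]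
    apply intervalIntegral.integral_congr
    intro s _
    show Real.exp (-b * (u - s)) * ψ s = Real.exp (-b * u) * (Real.exp (b * s) * ψ s)
    rw [← mul_assoc, ← Real.exp_add]
    ring_nf
  have hc : Continuous (fun s => Real.exp (b * s) * ψ s) :=
    (Real.continuous_exp.comp (continuous_const.mul continuous_id)).mul hψ
  have hP : HasDerivAt (fun u => ∫ s in (0:ℝ)..u, Real.exp (b * s) * ψ s)
      (Real.exp (b * t) * ψ t) t :=
    intervalIntegral.integral_hasDerivAt_right (hc.intervalIntegrable _ _)
      (hc.stronglyMeasurableAtFilter _ _) hc.continuousAt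
  have hE : HasDerivAt (fun u => Real.exp (-b * u)) (-b * Real.exp (-b * t)) t := by
    simpa [mul_comm] using ((hasDerivAt_id t).const_mul (-b)).exp
  have h2 := hE.mul hP
  change HasDerivAt (fun u => Real.exp (-b * u) * ∫ s in (0:ℝ)..u, Real.exp (b * s) * ψ s) _ t at h2
  have heq : (fun u => Real.exp (-b * u) * ∫ s in (0:ℝ)..u, Real.exp (b * s) * ψ s)
      = fun u => ∫ s in (0:ℝ)..u, Real.exp (-b * (u - s)) * ψ s := by
    funext u; rw [hrep u]
  rw [heq] at h2
  convert h2 using 1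
  rw [hrep t]
  have hone : Real.exp (-b * t) * Real.exp (b * t) = 1 := by
    rw [← Real.exp_add]; ring_nf; exact Real.exp_zero
  linear_combination (-(ψ t)) * hone

/-- Pathwise (smooth-driver) form of the path-dependent dynamics of the factor process
`Z_t = θ X_t + (1-θ) Y_t` of the two-factor Quintic OU model: with
`x(t) = ∫_0^t e^{-λx (t-s)} φ(s) ds`, `y(t) = ∫_0^t e^{-λy (t-s)} φ(s) ds`,
`z = θ x + (1-θ) y` and `ẑ(t) = ∫_0^t e^{-(λx(1-θ)+λy θ)(t-s)} z(s) ds`, the function `z`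
is differentiable on `[0,∞)` with
`z'(t) = -(λx θ + λy (1-θ)) z(t) + θ(1-θ)(λy-λx)² ẑ(t) + φ(t)`. -/
theorem two_factor_quintic_Z_path_dependent_dynamics
    (lx ly : ℝ) (hlx : 0 < lx) (hly : 0 < ly) (θ : ℝ)
    (φ : ℝ → ℝ) (hφ : Continuous φ)
    (x y z zhat : ℝ → ℝ)
    (hx : ∀ t, x t = ∫ s in (0:ℝ)..t, Real.exp (-lx * (t - s)) * φ s)
    (hy : ∀ t, y t = ∫ s in (0:ℝ)..t, Real.exp (-ly * (t - s)) * φ s)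
    (hz : ∀ t, z t = θ * x t + (1 - θ) * y t)
    (hzhat : ∀ t, zhat t =
      ∫ s in (0:ℝ)..t, Real.exp (-(lx * (1 - θ) + ly * θ) * (t - s)) * z s) :
    ∀ t ≥ (0:ℝ), HasDerivAt z
      (-(lx * θ + ly * (1 - θ)) * z t + θ * (1 - θ) * (ly - lx) ^ 2 * zhat t + φ t) t := by
  have hxd : ∀ u, HasDerivAt x (-lx * x u + φ u) u := by
    intro u
    have h := conv_deriv lx φ hφ u
    rw [← hx u] at h
    exact h.congr_of_eventuallyEq (Filter.Eventually.of_forall hx)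
  have hyd : ∀ u, HasDerivAt y (-ly * y u + φ u) u := by
    intro u
    have h := conv_deriv ly φ hφ u
    rw [← hy u] at h
    exact h.congr_of_eventuallyEq (Filter.Eventually.of_forall hy)
  have hzd : ∀ u, HasDerivAt z
      (θ * (-lx * x u + φ u) + (1 - θ) * (-ly * y u + φ u)) u := by
    intro u
    exact (((hxd u).const_mul θ).add ((hyd u).const_mul (1 - θ))).congr_of_eventuallyEq
      (Filter.Eventually.of_forall hz)
  have hzC : Continuous z := by
    have : Differentiable ℝ z := fun u => (hzd u).differentiableAt
    exact this.continuous
  have hzhd : ∀ u, HasDerivAt zhat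
      (-(lx * (1 - θ) + ly * θ) * zhat u + z u) u := by
    intro u
    have h := conv_deriv (lx * (1 - θ) + ly * θ) z hzC u
    rw [← hzhat u] at h
    exact h.congr_of_eventuallyEq (Filter.Eventually.of_forall hzhat)
  -- key identity: x - y = (ly - lx) * zhat
  set μ : ℝ := lx * (1 - θ) + ly * θ with hμ
  set W : ℝ → ℝ := fun u => Real.exp (μ * u) * ((ly - lx) * zhat u - (x u - y u)) with hW
  have hWd : ∀ u, HasDerivAt W 0 u := by
    intro u
    have hE : HasDerivAt (fun v => Real.exp (μ * v)) (μ * Real.exp (μ * u)) u := by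
      simpa [mul_comm] using ((hasDerivAt_id u).const_mul μ).exp
    have hInner : HasDerivAt (fun v => (ly - lx) * zhat v - (x v - y v))
        ((ly - lx) * (-μ * zhat u + z u) - ((-lx * x u + φ u) - (-ly * y u + φ u))) u :=
      ((hzhd u).const_mul (ly - lx)).sub ((hxd u).sub (hyd u))
    have h := hE.mul hInner
    change HasDerivAt (fun v => Real.exp (μ * v) * ((ly - lx) * zhat v - (x v - y v))) _ u at h
    convert h using 1
    rw [hz u]
    ring
  have hkey : ∀ u, x u - y u = (ly - lx) * zhat u := by
    have hconst : ∀ u, W u = W 0 :=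
      fun u => is_const_of_deriv_eq_zero (fun v => (hWd v).differentiableAt)
        (fun v => (hWd v).deriv) u 0
    have hW0 : W 0 = 0 := by
      simp [hW, hx, hy, hzhat]
    intro u
    have h := hconst u
    rw [hW0] at h
    have hne : Real.exp (μ * u) ≠ 0 := (Real.exp_pos _).ne'
    have := mul_eq_zero.mp h
    rcases this with h1 | h1
    · exact absurd h1 hne
    · linarith
  intro t _
  have h := hzd t
  convert h using 1
  rw [hz t]
  linear_combination (-(θ * (1 - θ) * (ly - lx))) * hkey t
end

section
/- Let λx, λy > 0, θ ∈ ℝ, and let φ : ℝ → ℝ be continuous. Define x(t) = ∫_0^t e^{-λx(t-s)} φ(s) ds, y(t) = ∫_0^t e^{-λy(t-s)} φ(s) ds, z(t) = θ x(t) + (1-θ) y(t), and z̃(t) = x(t) - y(t). Then z is differentiable on [0,∞) and for every t ≥ 0, z'(t) = -(λx θ + λy (1-θ)) z(t) + θ(1-θ)(λy - λx) z̃(t) + φ(t). -/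
open MeasureTheory intervalIntegral

lemma exp_conv_hasDerivAt (l : ℝ) (φ : ℝ → ℝ) (hφ : Continuous φ) (t : ℝ) :
    HasDerivAt (fun t => ∫ s in (0:ℝ)..t, Real.exp (-l * (t - s)) * φ s)
      (-l * (∫ s in (0:ℝ)..t, Real.exp (-l * (t - s)) * φ s) + φ t) t := by
  have hcont : Continuous (fun s => Real.exp (l * s) * φ s) :=
    (Real.continuous_exp.comp (continuous_const.mul continuous_id)).mul hφ
  set g : ℝ → ℝ := fun u => ∫ s in (0:ℝ)..u, Real.exp (l * s) * φ s with hg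
  have hkey : ∀ u : ℝ, (∫ s in (0:ℝ)..u, Real.exp (-l * (u - s)) * φ s)
      = Real.exp (-l * u) * g u := by
    intro u
    rw [hg, ← intervalIntegral.integral_const_mul]
    apply intervalIntegral.integral_congr
    intro s _
    show Real.exp (-l * (u - s)) * φ s = Real.exp (-l * u) * (Real.exp (l * s) * φ s)
    rw [← mul_assoc, ← Real.exp_add]
    ring_nf
  have hgderiv : HasDerivAt g (Real.exp (l * t) * φ t) t := by
    apply intervalIntegral.integral_hasDerivAt_right
      (hcont.intervalIntegrable _ _)
      (hcont.stronglyMeasurableAtFilter _ _)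
      hcont.continuousAt
  have hexp : HasDerivAt (fun u : ℝ => Real.exp (-l * u)) (-l * Real.exp (-l * t)) t := by
    have := ((hasDerivAt_id t).const_mul (-l)).exp
    simpa [mul_comm] using this
  have hprod := hexp.mul hgderiv
  have : HasDerivAt (fun u => Real.exp (-l * u) * g u)
      (-l * (Real.exp (-l * t) * g t) + φ t) t := by
    refine (hprod : HasDerivAt (fun u => Real.exp (-l * u) * g u) _ t).congr_deriv ?_
    rw [show Real.exp (-l * t) * (Real.exp (l * t) * φ t) = φ t by
      rw [← mul_assoc, ← Real.exp_add]; simp]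
    ring
  have heq : (fun u => ∫ s in (0:ℝ)..u, Real.exp (-l * (u - s)) * φ s)
      = fun u => Real.exp (-l * u) * g u := funext hkey
  rw [heq, hkey t]
  exact this
/-- Pathwise form of the intermediate dynamics of `Z = θ X + (1-θ) Y` in terms of the spread
`Z̃ = X - Y` in the two-factor Quintic OU model: with
`x(t) = ∫_0^t e^{-λx (t-s)} φ(s) ds`, `y(t) = ∫_0^t e^{-λy (t-s)} φ(s) ds`,
`z = θ x + (1-θ) y` and `z̃ = x - y`, the function `z` is differentiable on `[0,∞)` with
`z'(t) = -(λx θ + λy (1-θ)) z(t) + θ(1-θ)(λy - λx) z̃(t) + φ(t)`. -/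
theorem two_factor_quintic_Z_dynamics_via_spread
    (lx ly : ℝ) (hlx : 0 < lx) (hly : 0 < ly) (θ : ℝ)
    (φ : ℝ → ℝ) (hφ : Continuous φ)
    (x y z ztilde : ℝ → ℝ)
    (hx : ∀ t, x t = ∫ s in (0:ℝ)..t, Real.exp (-lx * (t - s)) * φ s)
    (hy : ∀ t, y t = ∫ s in (0:ℝ)..t, Real.exp (-ly * (t - s)) * φ s)
    (hz : ∀ t, z t = θ * x t + (1 - θ) * y t)
    (hztilde : ∀ t, ztilde t = x t - y t) :
    ∀ t ≥ (0:ℝ), HasDerivAt z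
      (-(lx * θ + ly * (1 - θ)) * z t + θ * (1 - θ) * (ly - lx) * ztilde t + φ t) t := by
  intro t ht
  have hxf : x = fun u => ∫ s in (0:ℝ)..u, Real.exp (-lx * (u - s)) * φ s := funext hx
  have hyf : y = fun u => ∫ s in (0:ℝ)..u, Real.exp (-ly * (u - s)) * φ s := funext hy
  have hxd : HasDerivAt x (-lx * x t + φ t) t := by
    rw [hxf]; exact exp_conv_hasDerivAt lx φ hφ t
  have hyd : HasDerivAt y (-ly * y t + φ t) t := by
    rw [hyf]; exact exp_conv_hasDerivAt ly φ hφ t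
  have hzd : HasDerivAt z (θ * (-lx * x t + φ t) + (1 - θ) * (-ly * y t + φ t)) t := by
    have := (hxd.const_mul θ).add (hyd.const_mul (1 - θ))
    have hzf : z = fun u => θ * x u + (1 - θ) * y u := funext hz
    rw [hzf]; exact this
  convert hzd using 1
  rw [hz t, hztilde t]
  ring
end

section
/- Let λx, λy > 0, θ ∈ ℝ, and let φ : ℝ → ℝ be continuous. Define x(t) = ∫_0^t e^{-λx(t-s)} φ(s) ds, y(t) = ∫_0^t e^{-λy(t-s)} φ(s) ds, and z(t) = θ x(t) + (1-θ) y(t). Then for every t ≥ 0, x(t) - y(t) = (λy - λx) ∫_0^t e^{-(λx(1-θ) + λy θ)(t-s)} z(s) ds. -/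
open MeasureTheory intervalIntegral

private lemma ou_hasDerivAt (l : ℝ) (φ : ℝ → ℝ) (hφ : Continuous φ) (x : ℝ → ℝ)
    (hx : ∀ t, x t = ∫ s in (0:ℝ)..t, Real.exp (-l * (t - s)) * φ s) (t : ℝ) :
    HasDerivAt x (-l * x t + φ t) t := by
  have hcont : Continuous fun s => Real.exp (l * s) * φ s :=
    (Real.continuous_exp.comp (continuous_const.mul continuous_id)).mul hφ
  have hX : ∀ u, x u = Real.exp (-l * u) * ∫ s in (0:ℝ)..u, Real.exp (l * s) * φ s := by
    intro u
    rw [hx, ← intervalIntegral.integral_const_mul]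
    apply intervalIntegral.integral_congr
    intro s _
    have h : Real.exp (-l * (u - s)) = Real.exp (-l * u) * Real.exp (l * s) := by
      rw [← Real.exp_add]; ring_nf
    simp only [h, mul_assoc]
  have hI : HasDerivAt (fun u => ∫ s in (0:ℝ)..u, Real.exp (l * s) * φ s)
      (Real.exp (l * t) * φ t) t := (hcont.integral_hasStrictDerivAt 0 t).hasDerivAt
  have h1 : HasDerivAt (fun u => Real.exp (-l * u)) (Real.exp (-l * t) * (-l)) t := by
    simpa using (((hasDerivAt_id t).const_mul (-l)).exp)
  have h2 := h1.fun_mul hI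
  have heq : (fun u => Real.exp (-l * u) * ∫ s in (0:ℝ)..u, Real.exp (l * s) * φ s) = x :=
    funext fun u => (hX u).symm
  rw [heq] at h2
  refine h2.congr_deriv (Eq.symm ?_)
  have he : Real.exp (-l * t) * Real.exp (l * t) = 1 := by
    rw [← Real.exp_add]; simp
  rw [hX t]
  linear_combination (-φ t) * he

/-- Closed-form integral representation of the spread process `Z̃ = X - Y` in terms of the
combined factor `Z = θ X + (1-θ) Y` in the pathwise form of the two-factor Quintic OU model:
with `x(t) = ∫_0^t e^{-λx (t-s)} φ(s) ds`, `y(t) = ∫_0^t e^{-λy (t-s)} φ(s) ds` and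
`z = θ x + (1-θ) y`, for every `t ≥ 0` one has
`x(t) - y(t) = (λy - λx) ∫_0^t e^{-(λx(1-θ) + λy θ)(t-s)} z(s) ds`. -/
theorem two_factor_quintic_spread_integral_representation
    (lx ly : ℝ) (hlx : 0 < lx) (hly : 0 < ly) (θ : ℝ)
    (φ : ℝ → ℝ) (hφ : Continuous φ)
    (x y z : ℝ → ℝ)
    (hx : ∀ t, x t = ∫ s in (0:ℝ)..t, Real.exp (-lx * (t - s)) * φ s)
    (hy : ∀ t, y t = ∫ s in (0:ℝ)..t, Real.exp (-ly * (t - s)) * φ s)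
    (hz : ∀ t, z t = θ * x t + (1 - θ) * y t) :
    ∀ t ≥ (0:ℝ), x t - y t =
      (ly - lx) * ∫ s in (0:ℝ)..t, Real.exp (-(lx * (1 - θ) + ly * θ) * (t - s)) * z s := by
  intro t ht
  set μ : ℝ := lx * (1 - θ) + ly * θ with hμ
  have hxd := ou_hasDerivAt lx φ hφ x hx
  have hyd := ou_hasDerivAt ly φ hφ y hy
  have hxc : Continuous x := continuous_iff_continuousAt.2 fun u => (hxd u).continuousAt
  have hyc : Continuous y := continuous_iff_continuousAt.2 fun u => (hyd u).continuousAt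
  have hzc : Continuous z := by
    have : z = fun u => θ * x u + (1 - θ) * y u := funext hz
    rw [this]
    exact ((continuous_const.mul hxc).add (continuous_const.mul hyc))
  have hg : ∀ s : ℝ, HasDerivAt (fun u => Real.exp (μ * u) * (x u - y u))
      ((ly - lx) * (Real.exp (μ * s) * z s)) s := by
    intro s
    have h1 : HasDerivAt (fun u => Real.exp (μ * u)) (Real.exp (μ * s) * μ) s := by
      simpa using (((hasDerivAt_id s).const_mul μ).exp)
    have h2 := h1.fun_mul ((hxd s).fun_sub (hyd s))
    refine h2.congr_deriv (Eq.symm ?_)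
    rw [hz s]
    ring
  have hint : IntervalIntegrable (fun s => (ly - lx) * (Real.exp (μ * s) * z s)) volume 0 t := by
    apply Continuous.intervalIntegrable
    exact continuous_const.mul ((Real.continuous_exp.comp (continuous_const.mul continuous_id)).mul hzc)
  have key := intervalIntegral.integral_eq_sub_of_hasDerivAt (fun s _ => hg s) hint
  have hx0 : x 0 = 0 := by rw [hx]; simp
  have hy0 : y 0 = 0 := by rw [hy]; simp
  rw [hx0, hy0] at key
  simp only [mul_zero, Real.exp_zero, sub_zero, sub_self, one_mul] at key
  have hrw : ∀ s : ℝ, Real.exp (-μ * (t - s)) * z s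
      = Real.exp (-μ * t) * (Real.exp (μ * s) * z s) := by
    intro s
    rw [← mul_assoc, ← Real.exp_add]
    ring_nf
  calc x t - y t = Real.exp (-μ * t) * (Real.exp (μ * t) * (x t - y t)) := by
        rw [← mul_assoc, ← Real.exp_add]; simp
    _ = Real.exp (-μ * t) * ∫ s in (0:ℝ)..t, (ly - lx) * (Real.exp (μ * s) * z s) := by
        rw [key]
    _ = (ly - lx) * ∫ s in (0:ℝ)..t, Real.exp (-μ * (t - s)) * z s := by
        rw [intervalIntegral.integral_const_mul]
        rw [show (∫ s in (0:ℝ)..t, Real.exp (-μ * (t - s)) * z s)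
            = ∫ s in (0:ℝ)..t, Real.exp (-μ * t) * (Real.exp (μ * s) * z s) from
          intervalIntegral.integral_congr fun s _ => hrw s]
        rw [intervalIntegral.integral_const_mul]
        ring
end

section
/- Let (Ω, F, P) be a probability space, m ⊆ F a sub-σ-algebra, and X, Y : Ω → ℝ m-measurable random variables with E[|X|^10] < ∞ and E[|Y|^10] < ∞. Let G : Ω → ℝ be a centered Gaussian random variable with variance s² whose generated σ-algebra is independent of m, let a, b ∈ ℝ, and set H = aX + bY. Let α_0,…,α_5 ∈ ℝ, p(z) = Σ_{k=0}^{5} α_k z^k, α_k = 0 for k > 5, and (α*α)_k = Σ_{j=0}^{k} α_j α_{k-j}. Then E[p(H+G)² | m] = Σ_{k=0}^{10} (α*α)_k Σ_{ℓ=0}^{k} C(k,ℓ) H^ℓ m_{k-ℓ}(s²) almost surely, where C(k,ℓ) = k!/((k-ℓ)! ℓ!) and m_j(s²) = 0 if j is odd and m_j(s²) = (s²)^{j/2} · j!/(2^{j/2} (j/2)!) if j is even. -/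
open MeasureTheory ProbabilityTheory


open MeasureTheory Real Filter Set ProbabilityTheory Polynomial
open scoped NNReal ENNReal

section QuinticAux
lemma integrable_pow_mul_gauss {b : ℝ} (hb : 0 < b) (n : ℕ) :
    Integrable (fun x : ℝ => x ^ n * Real.exp (-b * x ^ 2)) := by
  have := integrable_rpow_mul_exp_neg_mul_sq hb (s := (n : ℝ)) (neg_one_lt_zero.trans_le (Nat.cast_nonneg n))
  simpa [Real.rpow_natCast] using this

lemma gauss_rec {b : ℝ} (hb : 0 < b) (n : ℕ) :
    ∫ x : ℝ, x ^ (n + 2) * Real.exp (-b * x ^ 2)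
      = ((n + 1 : ℝ) / (2 * b)) * ∫ x : ℝ, x ^ n * Real.exp (-b * x ^ 2) := by
  have hb' : (2 * b) ≠ 0 := by positivity
  set F : ℝ → ℝ := fun x => -(2 * b)⁻¹ * (x ^ (n + 1) * Real.exp (-b * x ^ 2)) with hF
  set f' : ℝ → ℝ := fun x =>
    x ^ (n + 2) * Real.exp (-b * x ^ 2)
      - ((n + 1 : ℝ) / (2 * b)) * (x ^ n * Real.exp (-b * x ^ 2)) with hf'
  have hderiv : ∀ x : ℝ, HasDerivAt F (f' x) x := by
    intro x
    have h1 : HasDerivAt (fun x : ℝ => x ^ (n + 1)) ((n + 1 : ℝ) * x ^ n) x := by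
      simpa using hasDerivAt_pow (n + 1) x
    have h2 : HasDerivAt (fun x : ℝ => Real.exp (-b * x ^ 2))
        ((-b * (2 * x)) * Real.exp (-b * x ^ 2)) x := by
      have := ((hasDerivAt_pow 2 x).const_mul (-b)).exp
      simpa [mul_comm] using this
    have := ((h1.mul h2).const_mul (-(2 * b)⁻¹))
    refine this.congr_deriv ?_
    simp only [hf']
    field_simp
    ring
  have hint : ∀ k : ℕ, Integrable (fun x : ℝ => x ^ k * Real.exp (-b * x ^ 2)) :=
    fun k => integrable_pow_mul_gauss hb k
  have hf'int : Integrable f' := ((hint (n + 2)).sub ((hint n).const_mul _))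
  have hFint : Integrable F := ((hint (n + 1)).const_mul _)
  have h0 : ∫ x : ℝ, f' x = 0 :=
    integral_eq_zero_of_hasDerivAt_of_integrable hderiv hf'int hFint
  rw [hf'] at h0
  rw [integral_sub (hint (n + 2)) ((hint n).const_mul _)] at h0
  rw [integral_const_mul] at h0
  linarith

lemma gauss_even {b : ℝ} (hb : 0 < b) (k : ℕ) :
    ∫ x : ℝ, x ^ (2 * k) * Real.exp (-b * x ^ 2)
      = Real.sqrt (π / b) * (Nat.factorial (2 * k))
        / (2 ^ k * Nat.factorial k * (2 * b) ^ k) := by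
  induction k with
  | zero => simpa using integral_gaussian b
  | succ k ih =>
      have h2 : 2 * (k + 1) = 2 * k + 2 := by ring
      rw [h2, gauss_rec hb (2 * k), ih]
      have hfac : (Nat.factorial (2 * (k + 1)) : ℝ)
          = (2 * k + 2) * (2 * k + 1) * Nat.factorial (2 * k) := by
        rw [show 2 * (k + 1) = (2 * k + 1) + 1 by ring]
        rw [Nat.factorial_succ, Nat.factorial_succ]
        push_cast
        ring
      rw [show 2 * (k + 1) = 2 * k + 2 from by ring] at hfac
      rw [hfac]
      have hkfac : (Nat.factorial (k + 1) : ℝ) = (k + 1) * Nat.factorial k := by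
        rw [Nat.factorial_succ]; push_cast; ring
      rw [hkfac]
      have hb0 : b ≠ 0 := ne_of_gt hb
      have hfk : (Nat.factorial k : ℝ) ≠ 0 := Nat.cast_ne_zero.2 (Nat.factorial_ne_zero k)
      field_simp
      push_cast
      ring

lemma integral_gaussianReal_eq {v : ℝ≥0} (hv : v ≠ 0) (g : ℝ → ℝ) :
    ∫ x, g x ∂(gaussianReal 0 v) = ∫ x, gaussianPDFReal 0 v x * g x := by
  rw [gaussianReal_of_var_ne_zero _ hv]
  have hpdf : (gaussianPDF 0 v) = fun x => ((gaussianPDFReal 0 v x).toNNReal : ℝ≥0∞) := rfl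
  rw [hpdf, integral_withDensity_eq_integral_smul
    ((measurable_gaussianPDFReal 0 v).real_toNNReal) g]
  congr 1
  ext x
  rw [NNReal.smul_def, Real.coe_toNNReal _ (gaussianPDFReal_nonneg 0 v x)]
  rfl

lemma integrable_gaussianReal_iff {v : ℝ≥0} (hv : v ≠ 0) (g : ℝ → ℝ) :
    Integrable g (gaussianReal 0 v) ↔ Integrable (fun x => gaussianPDFReal 0 v x * g x) := by
  rw [gaussianReal_of_var_ne_zero _ hv]
  have hpdf : (gaussianPDF 0 v) = fun x => ((gaussianPDFReal 0 v x).toNNReal : ℝ≥0∞) := rfl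
  rw [hpdf, integrable_withDensity_iff_integrable_smul
    ((measurable_gaussianPDFReal 0 v).real_toNNReal)]
  constructor <;> intro h <;> refine h.congr (Filter.Eventually.of_forall fun x => ?_) <;>
    simp [NNReal.smul_def, Real.coe_toNNReal _ (gaussianPDFReal_nonneg 0 v x)]

lemma gaussianPDFReal_zero_mul_pow {v : ℝ≥0} (hv : v ≠ 0) (n : ℕ) (x : ℝ) :
    gaussianPDFReal 0 v x * x ^ n
      = (Real.sqrt (2 * π * v))⁻¹ * (x ^ n * Real.exp (-(2 * (v : ℝ))⁻¹ * x ^ 2)) := by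
  have hv' : (0 : ℝ) < v := lt_of_le_of_ne v.coe_nonneg (by exact_mod_cast (Ne.symm hv))
  rw [gaussianPDFReal]
  rw [show -(x - 0) ^ 2 / (2 * (v : ℝ)) = -(2 * (v : ℝ))⁻¹ * x ^ 2 by
    rw [sub_zero]; field_simp]
  ring

lemma integrable_pow_gaussianReal (v : ℝ≥0) (n : ℕ) :
    Integrable (fun x : ℝ => x ^ n) (gaussianReal 0 v) := by
  by_cases hv : v = 0
  · rw [hv, gaussianReal_zero_var]
    refine ⟨(measurable_id.pow_const n).aestronglyMeasurable, ?_⟩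
    simp only [HasFiniteIntegral, lintegral_dirac]
    exact ENNReal.coe_lt_top
  · have hv' : (0 : ℝ) < v := lt_of_le_of_ne v.coe_nonneg (by exact_mod_cast (Ne.symm hv))
    have hb : (0 : ℝ) < (2 * (v : ℝ))⁻¹ := by positivity
    rw [integrable_gaussianReal_iff hv]
    refine ((integrable_pow_mul_gauss hb n).const_mul (Real.sqrt (2 * π * v))⁻¹).congr
      (Filter.Eventually.of_forall fun x => ?_)
    simpa using (gaussianPDFReal_zero_mul_pow hv n x).symm

lemma integral_pow_gaussianReal (v : ℝ≥0) (n : ℕ) :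
    ∫ x, x ^ n ∂(gaussianReal 0 v)
      = if Even n then
          (v : ℝ) ^ (n / 2) * (Nat.factorial n) / (2 ^ (n / 2) * Nat.factorial (n / 2))
        else 0 := by
  by_cases hv : v = 0
  · rw [hv, gaussianReal_zero_var, integral_dirac (fun x : ℝ => x ^ n) 0]
    rcases Nat.eq_zero_or_pos n with hn | hn
    · simp [hn]
    · rw [zero_pow (Nat.pos_iff_ne_zero.mp hn)]
      by_cases he : Even n
      · have h2 : n / 2 ≠ 0 := by
          rw [Nat.even_iff] at he; omega
        simp [he, hv, zero_pow h2]
      · simp [he]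
  · have hv' : (0 : ℝ) < v := lt_of_le_of_ne v.coe_nonneg (by exact_mod_cast (Ne.symm hv))
    set b : ℝ := (2 * (v : ℝ))⁻¹ with hbdef
    have hb : (0 : ℝ) < b := by positivity
    rw [integral_gaussianReal_eq hv]
    have : ∫ x, gaussianPDFReal 0 v x * x ^ n
        = (Real.sqrt (2 * π * v))⁻¹ * ∫ x, x ^ n * Real.exp (-b * x ^ 2) := by
      rw [← integral_const_mul]
      exact integral_congr_ae (Filter.Eventually.of_forall fun x =>
        gaussianPDFReal_zero_mul_pow hv n x)
    rw [this]
    by_cases he : Even n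
    · obtain ⟨k, hk⟩ := he
      have hn2 : n = 2 * k := by omega
      subst hn2
      rw [gauss_even hb k]
      have hsq : Real.sqrt (π / b) = Real.sqrt (2 * π * v) := by
        congr 1
        rw [hbdef]
        field_simp
      have h2b : 2 * b = (v : ℝ)⁻¹ := by rw [hbdef]; field_simp
      have hd : (2 * k) / 2 = k := by omega
      rw [hsq, h2b, hd, if_pos (even_two_mul k)]
      have hs0 : Real.sqrt (2 * π * v) ≠ 0 := by positivity
      have hfk : (Nat.factorial k : ℝ) ≠ 0 := Nat.cast_ne_zero.2 (Nat.factorial_ne_zero k)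
      field_simp
      ring
      rw [← mul_pow, mul_inv_cancel₀ hv'.ne', one_pow]
    · rw [if_neg he]
      have hodd : Odd n := Nat.not_even_iff_odd.mp he
      have h0 : ∫ x : ℝ, x ^ n * Real.exp (-b * x ^ 2) = 0 := by
        have hneg := (Measure.measurePreserving_neg (volume : Measure ℝ)).integral_comp
          (Homeomorph.neg ℝ).measurableEmbedding
          (fun x : ℝ => x ^ n * Real.exp (-b * x ^ 2))
        simp only [hodd.neg_pow, neg_sq, neg_mul, integral_neg] at hneg
        simp only [neg_mul]
        linarith
      rw [h0, mul_zero]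

lemma sq_sum_pow (α : ℕ → ℝ) (hα : ∀ k > 5, α k = 0) (z : ℝ) :
    (∑ k ∈ Finset.range 6, α k * z ^ k) ^ 2
      = ∑ k ∈ Finset.range 11, (∑ j ∈ Finset.range (k + 1), α j * α (k - j)) * z ^ k := by
  set p : Polynomial ℝ := ∑ k ∈ Finset.range 6, C (α k) * X ^ k with hp
  have hcoeff : ∀ j, p.coeff j = α j := by
    intro j
    rw [hp, Polynomial.finset_sum_coeff]
    simp_rw [Polynomial.coeff_C_mul, Polynomial.coeff_X_pow, mul_ite, mul_one, mul_zero]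
    rw [Finset.sum_ite_eq (Finset.range 6) j α]
    by_cases hj : j < 6
    · simp [Finset.mem_range, hj]
    · rw [if_neg (by simpa using hj)]
      exact (hα j (by omega)).symm
  have heval : p.eval z = ∑ k ∈ Finset.range 6, α k * z ^ k := by
    rw [hp, Polynomial.eval_finset_sum]
    simp
  have hdeg : p.natDegree ≤ 5 := by
    refine Polynomial.natDegree_sum_le_of_forall_le _ _ fun i hi => ?_
    refine le_trans (Polynomial.natDegree_C_mul_le _ _) ?_
    simpa using Nat.lt_succ_iff.mp (Finset.mem_range.mp hi)
  have hdeg2 : (p * p).natDegree < 11 :=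
    lt_of_le_of_lt (Polynomial.natDegree_mul_le) (by omega)
  have := Polynomial.eval_eq_sum_range' hdeg2 z
  rw [← heval, ← Polynomial.eval_pow, sq p, this]
  refine Finset.sum_congr rfl fun k _ => ?_
  congr 1
  rw [Polynomial.coeff_mul, Finset.Nat.sum_antidiagonal_eq_sum_range_succ_mk]
  exact Finset.sum_congr rfl fun j _ => by rw [hcoeff, hcoeff]


lemma eventuallyEq_finset_sum {ι Ω' : Type*} {l : Filter Ω'} (s : Finset ι) (f g : ι → Ω' → ℝ)
    (h : ∀ i ∈ s, f i =ᶠ[l] g i) : (∑ i ∈ s, f i) =ᶠ[l] (∑ i ∈ s, g i) := by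
  classical
  induction s using Finset.induction_on with
  | empty => simp
  | @insert x t hx ih =>
      rw [Finset.sum_insert hx, Finset.sum_insert hx]
      exact (h _ (Finset.mem_insert_self _ _)).add
        (ih fun i hi => h i (Finset.mem_insert_of_mem hi))

end QuinticAux

/-- Explicit conditional expectation of the squared quintic polynomial volatility factor
given the Markovian decomposition `Z_s = H_t^s + G_t^s` of the two-factor Quintic OU model:
with `H = aX + bY` built from `m`-measurable `X, Y` having finite tenth moments, and `G` a
centered Gaussian with variance `s²` independent of `m`,
`E[p(H+G)² | m] = Σ_{k=0}^{10} (α*α)_k Σ_{ℓ=0}^{k} C(k,ℓ) H^ℓ m_{k-ℓ}(s²)` a.s.,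
where `m_j(s²)` is the `j`-th centered Gaussian moment. -/
theorem condexp_sq_quintic_polynomial_markovian_decomposition
    {Ω : Type*} {F : MeasurableSpace Ω} (P : Measure Ω) [IsProbabilityMeasure P]
    (m : MeasurableSpace Ω) (hm : m ≤ F)
    (X Y : Ω → ℝ) (hX : Measurable[m] X) (hY : Measurable[m] Y)
    (hX10 : Integrable (fun ω => |X ω| ^ 10) P)
    (hY10 : Integrable (fun ω => |Y ω| ^ 10) P)
    (G : Ω → ℝ) (hG : Measurable[F] G) (s : ℝ)
    (hlaw : @Measure.map Ω ℝ F Real.measurableSpace G P = gaussianReal 0 (s ^ 2).toNNReal)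
    (hindep : Indep (MeasurableSpace.comap G Real.measurableSpace) m P)
    (a b : ℝ) (H : Ω → ℝ) (hH : ∀ ω, H ω = a * X ω + b * Y ω)
    (α : ℕ → ℝ) (hα : ∀ k > 5, α k = 0) :
    P[(fun ω => (∑ k ∈ Finset.range 6, α k * (H ω + G ω) ^ k) ^ 2)|m] =ᵐ[P]
      fun ω => ∑ k ∈ Finset.range 11,
        (∑ j ∈ Finset.range (k + 1), α j * α (k - j)) *
        ∑ ℓ ∈ Finset.range (k + 1),
          (k.choose ℓ : ℝ) * H ω ^ ℓ *
          (if Even (k - ℓ) then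
              (s ^ 2) ^ ((k - ℓ) / 2) * (Nat.factorial (k - ℓ)) /
                (2 ^ ((k - ℓ) / 2) * Nat.factorial ((k - ℓ) / 2))
            else 0) := by
  classical
  set c : ℕ → ℝ := fun k => ∑ j ∈ Finset.range (k + 1), α j * α (k - j) with hc
  set Mo : ℕ → ℝ := fun j => if Even j then
      (s ^ 2) ^ (j / 2) * (Nat.factorial j) / (2 ^ (j / 2) * Nat.factorial (j / 2)) else 0
    with hMo
  set S : Finset ((_ : ℕ) × ℕ) := (Finset.range 11).sigma (fun k => Finset.range (k + 1)) with hS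
  set g : ((_ : ℕ) × ℕ) → Ω → ℝ := fun p ω =>
    (c p.1 * (p.1.choose p.2 : ℝ)) * (H ω ^ p.2 * G ω ^ (p.1 - p.2)) with hg
  have hHm : Measurable[m] H := by
    have hHeq : H = fun ω => a * X ω + b * Y ω := funext hH
    rw [hHeq]; exact (hX.const_mul a).add (hY.const_mul b)
  have hHF : Measurable[F] H := hHm.mono hm le_rfl
  -- integrability of powers of H
  have hHint : ∀ ℓ : ℕ, ℓ ≤ 10 → Integrable (fun ω => H ω ^ ℓ) P := by
    intro ℓ hℓ
    have hbound : ∀ ω, ‖H ω ^ ℓ‖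
        ≤ 1 + 2 ^ 10 * (|a| ^ 10 * |X ω| ^ 10 + |b| ^ 10 * |Y ω| ^ 10) := by
      intro ω
      have h1 : ‖H ω ^ ℓ‖ = |H ω| ^ ℓ := by rw [Real.norm_eq_abs, abs_pow]
      have h2 : |H ω| ^ ℓ ≤ 1 + |H ω| ^ 10 := by
        rcases le_total (|H ω|) 1 with h | h
        · have h' := pow_le_one₀ (abs_nonneg (H ω)) h (n := ℓ)
          nlinarith [pow_nonneg (abs_nonneg (H ω)) 10]
        · have h' := pow_le_pow_right₀ h hℓ
          linarith
      have h3 : |H ω| ≤ |a| * |X ω| + |b| * |Y ω| := by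
        rw [hH ω]
        exact (abs_add_le _ _).trans (by rw [abs_mul, abs_mul])
      have h4 : |H ω| ^ 10 ≤ (|a| * |X ω| + |b| * |Y ω|) ^ 10 :=
        pow_le_pow_left₀ (abs_nonneg _) h3 10
      have h5 : (|a| * |X ω| + |b| * |Y ω|) ^ 10
          ≤ 2 ^ 10 * ((|a| * |X ω|) ^ 10 + (|b| * |Y ω|) ^ 10) := by
        set u := |a| * |X ω| with hu'
        set w := |b| * |Y ω| with hw'
        have hu : 0 ≤ u := by positivity
        have hw : 0 ≤ w := by positivity
        have hmax : u + w ≤ 2 * max u w := by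
          rcases max_cases u w with ⟨hm1, hm2⟩ | ⟨hm1, hm2⟩ <;> rw [hm1] <;> linarith
        calc (u + w) ^ 10 ≤ (2 * max u w) ^ 10 := pow_le_pow_left₀ (by positivity) hmax 10
          _ = 2 ^ 10 * (max u w) ^ 10 := by rw [mul_pow]
          _ ≤ 2 ^ 10 * (u ^ 10 + w ^ 10) := by
              refine mul_le_mul_of_nonneg_left ?_ (by positivity)
              rcases max_cases u w with ⟨hm1, _⟩ | ⟨hm1, _⟩ <;> rw [hm1] <;>
                nlinarith [pow_nonneg hu 10, pow_nonneg hw 10]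
      rw [mul_pow, mul_pow] at h5
      rw [h1]
      calc |H ω| ^ ℓ ≤ 1 + |H ω| ^ 10 := h2
        _ ≤ 1 + 2 ^ 10 * (|a| ^ 10 * |X ω| ^ 10 + |b| ^ 10 * |Y ω| ^ 10) := by
            have := h4.trans h5
            linarith
    refine Integrable.mono' ?_ ((hHF.pow_const ℓ).aestronglyMeasurable)
      (Filter.Eventually.of_forall hbound)
    exact (integrable_const 1).add
      (((hX10.const_mul (|a| ^ 10)).add (hY10.const_mul (|b| ^ 10))).const_mul (2 ^ 10))
  -- Gaussian powers
  have hmeaspow : ∀ j : ℕ, Measurable fun x : ℝ => x ^ j := fun j => measurable_id.pow_const j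
  have hGj : ∀ j : ℕ, Integrable (fun ω => G ω ^ j) P := by
    intro j
    have h1 : Integrable (fun x : ℝ => x ^ j) (@Measure.map Ω ℝ F Real.measurableSpace G P) := by
      rw [hlaw]; exact integrable_pow_gaussianReal _ j
    rwa [integrable_map_measure ((hmeaspow j).aestronglyMeasurable) hG.aemeasurable] at h1
  have hGexp : ∀ j : ℕ, (∫ ω, G ω ^ j ∂P) = Mo j := by
    intro j
    have h1 : ∫ ω, G ω ^ j ∂P = ∫ x, x ^ j ∂(@Measure.map Ω ℝ F Real.measurableSpace G P) :=
      (integral_map (μ := P) (φ := G) hG.aemeasurable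
        ((hmeaspow j).aestronglyMeasurable)).symm
    rw [h1, hlaw, integral_pow_gaussianReal, hMo]
    rw [Real.coe_toNNReal _ (sq_nonneg s)]
  -- independence
  have hcomapG_le : MeasurableSpace.comap G Real.measurableSpace ≤ F := hG.comap_le
  have hGmeas_comap : @Measurable Ω ℝ (MeasurableSpace.comap G Real.measurableSpace)
      Real.measurableSpace G := fun s hs => ⟨s, hs, rfl⟩
  have hindepPair : ∀ (ℓ j : ℕ) (d : ℝ),
      IndepFun (fun ω => d * H ω ^ ℓ) (fun ω => G ω ^ j) P := by
    intro ℓ j d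
    have h1 : Indep m (MeasurableSpace.comap G Real.measurableSpace) P := hindep.symm
    have h2 : MeasurableSpace.comap (fun ω => d * H ω ^ ℓ) Real.measurableSpace ≤ m :=
      ((hHm.pow_const ℓ).const_mul d).comap_le
    have h3 : MeasurableSpace.comap (fun ω => G ω ^ j) Real.measurableSpace
        ≤ MeasurableSpace.comap G Real.measurableSpace :=
      ((hmeaspow j).comp hGmeas_comap).comap_le
    exact indep_of_indep_of_le_right (indep_of_indep_of_le_left h1 h2) h3
  -- integrability of each term
  have hgint : ∀ p ∈ S, Integrable (g p) P := by
    rintro ⟨k, ℓ⟩ hp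
    rw [hS, Finset.mem_sigma, Finset.mem_range, Finset.mem_range] at hp
    obtain ⟨hk, hℓ⟩ := hp
    replace hk : k < 11 := hk
    replace hℓ : ℓ < k + 1 := hℓ
    have hgp : g ⟨k, ℓ⟩ = (fun ω => (c k * (k.choose ℓ : ℝ)) * H ω ^ ℓ)
        * fun ω => G ω ^ (k - ℓ) := by
      funext ω; simp only [hg, Pi.mul_apply]; ring
    rw [hgp]
    exact (hindepPair ℓ (k - ℓ) _).integrable_mul
      ((hHint ℓ (by omega)).const_mul _) (hGj (k - ℓ))
  -- per-term conditional expectation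
  have hterm : ∀ p ∈ S, P[g p|m] =ᵐ[P]
      fun ω => (c p.1 * (p.1.choose p.2 : ℝ)) * (H ω ^ p.2 * Mo (p.1 - p.2)) := by
    rintro ⟨k, ℓ⟩ hp
    rw [hS, Finset.mem_sigma, Finset.mem_range, Finset.mem_range] at hp
    obtain ⟨hk, hℓ⟩ := hp
    replace hk : k < 11 := hk
    replace hℓ : ℓ < k + 1 := hℓ
    set d : ℝ := c k * (k.choose ℓ : ℝ) with hd
    have hgp : g ⟨k, ℓ⟩ = (fun ω => d * H ω ^ ℓ) * fun ω => G ω ^ (k - ℓ) := by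
      funext ω; simp only [hg, hd, Pi.mul_apply]; ring
    have hf_int : Integrable (fun ω => d * H ω ^ ℓ) P := (hHint ℓ (by omega)).const_mul d
    have hg_int : Integrable (fun ω => G ω ^ (k - ℓ)) P := hGj (k - ℓ)
    have hfg_int : Integrable ((fun ω => d * H ω ^ ℓ) * fun ω => G ω ^ (k - ℓ)) P :=
      (hindepPair ℓ (k - ℓ) d).integrable_mul hf_int hg_int
    have hmul := condExp_mul_of_stronglyMeasurable_left
      ((hHm.pow_const ℓ).const_mul d).stronglyMeasurable hfg_int hg_int
    have hcond : P[fun ω => G ω ^ (k - ℓ)|m] =ᵐ[P] fun _ => ∫ ω, G ω ^ (k - ℓ) ∂P :=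
      condExp_indep_eq hcomapG_le hm
        (((hmeaspow (k - ℓ)).comp hGmeas_comap).stronglyMeasurable) hindep
    rw [hgp]
    refine hmul.trans ?_
    have hstep : (fun ω => d * H ω ^ ℓ) * P[fun ω => G ω ^ (k - ℓ)|m]
        =ᵐ[P] fun ω => d * (H ω ^ ℓ * Mo (k - ℓ)) := by
      refine hcond.mono fun ω hω => ?_
      simp only [Pi.mul_apply, hω, hGexp (k - ℓ)]
      ring
    exact hstep
  -- assemble
  have hfun : (fun ω => (∑ k ∈ Finset.range 6, α k * (H ω + G ω) ^ k) ^ 2) = ∑ p ∈ S, g p := by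
    funext ω
    rw [Finset.sum_apply, sq_sum_pow α hα (H ω + G ω), hS, Finset.sum_sigma]
    refine Finset.sum_congr rfl fun k _ => ?_
    rw [add_pow, Finset.mul_sum]
    refine Finset.sum_congr rfl fun ℓ _ => ?_
    simp only [hg, hc]
    ring
  have h1 : P[(fun ω => (∑ k ∈ Finset.range 6, α k * (H ω + G ω) ^ k) ^ 2)|m]
      =ᵐ[P] ∑ p ∈ S, P[g p|m] := by
    rw [hfun]
    exact condExp_finset_sum hgint m
  refine h1.trans ?_
  have h2 := eventuallyEq_finset_sum S (fun p => P[g p|m])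
    (fun p => fun ω => (c p.1 * (p.1.choose p.2 : ℝ)) * (H ω ^ p.2 * Mo (p.1 - p.2))) hterm
  refine h2.trans (Filter.Eventually.of_forall fun ω => ?_)
  rw [Finset.sum_apply, hS, Finset.sum_sigma]
  refine Finset.sum_congr rfl fun k hk => ?_
  rw [Finset.mul_sum]
  refine Finset.sum_congr rfl fun ℓ _ => ?_
  simp only [hc, hMo]
  ring
end
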